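/- If φ(n) is a non-decreasing sequence of positive reals such that the set E_{φ(n),α} = {x in (0,1)\Q : lim_{n→∞} s_n(x)/φ(n) = α} has Hausdorff dimension 1 for some α > 0, then limsup_{n→∞} φ(n)/n = ∞. -/

import Mathlib

open Filter MeasureTheory Set

/-- The Gauss map. -/
noncomputable def gaussMap (x : ℝ) : ℝ := Int.fract x⁻¹

/-- The `n`-th continued fraction partial quotient of `x` (1-indexed). -/
noncomputable def cfA (x : ℝ) (n : ℕ) : ℕ := ⌊(gaussMap^[n - 1] x)⁻¹⌋₊

/-- `s_n(x)`, the sum of the first `n` partial quotients. -/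
noncomputable def cfS (x : ℝ) (n : ℕ) : ℕ := ∑ j ∈ Finset.Icc 1 n, cfA x j

/-- The level set `E_{φ(n),α} = {x : lim s_n(x)/φ(n) = α}` (irrationals in `(0,1)`). -/
noncomputable def levelSet (φ : ℕ → ℝ) (α : ℝ) : Set ℝ :=
  {x : ℝ | x ∈ Set.Ioo (0 : ℝ) 1 ∧ Irrational x ∧
    Tendsto (fun n => (cfS x n : ℝ) / φ n) atTop (nhds α)}

/-- `F_A = {x : s_n(x)/n ≤ A for all n ≥ 1}` (irrationals in `(0,1)`). -/
noncomputable def slowSet (A : ℝ) : Set ℝ :=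
  {x : ℝ | x ∈ Set.Ioo (0 : ℝ) 1 ∧ Irrational x ∧
    ∀ n, 1 ≤ n → (cfS x n : ℝ) / n ≤ A}

noncomputable def hmap (y : ℝ) : ℝ := (1 + y)⁻¹

lemma cfS_range (x : ℝ) (n : ℕ) : cfS x n = ∑ i ∈ Finset.range n, cfA x (i + 1) := by
  induction n with
  | zero => simp [cfS]
  | succ n ih =>
    rw [cfS, Finset.sum_Icc_succ_top (Nat.one_le_iff_ne_zero.mpr (Nat.succ_ne_zero n)),
      Finset.sum_range_succ, ← ih, cfS]

lemma cfS_mono (x : ℝ) : Monotone (cfS x) := fun _ _ h =>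
  Finset.sum_le_sum_of_subset (Finset.Icc_subset_Icc_right h)

lemma hmap_mem {y : ℝ} (hy : y ∈ Ioo (0:ℝ) 1) : hmap y ∈ Ioo (2⁻¹ : ℝ) 1 := by
  have h1 : (0:ℝ) < 1 + y := by linarith [hy.1]
  constructor
  · rw [hmap, inv_lt_inv₀ (by norm_num) h1]
    linarith [hy.2]
  · rw [hmap, inv_lt_one_iff₀]
    right; linarith [hy.1]

lemma hmap_mem' {y : ℝ} (hy : y ∈ Ioo (0:ℝ) 1) : hmap y ∈ Ioo (0:ℝ) 1 :=
  ⟨lt_trans (by norm_num) (hmap_mem hy).1, (hmap_mem hy).2⟩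

lemma gauss_hmap {y : ℝ} (hy : y ∈ Ico (0:ℝ) 1) : gaussMap (hmap y) = y := by
  rw [gaussMap, hmap, inv_inv]
  rw [show (1:ℝ) + y = ((1:ℤ):ℝ) + y by norm_num, Int.fract_intCast_add]
  exact Int.fract_eq_self.mpr ⟨hy.1, hy.2⟩

lemma cfA_hmap_one {y : ℝ} (hy : y ∈ Ico (0:ℝ) 1) : cfA (hmap y) 1 = 1 := by
  rw [cfA]
  simp only [Nat.sub_self, Function.iterate_zero, id_eq, hmap, inv_inv]
  rw [Nat.floor_eq_iff (by linarith [hy.1])]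
  constructor <;> push_cast <;> linarith [hy.1, hy.2]

lemma cfA_hmap_succ {y : ℝ} (hy : y ∈ Ico (0:ℝ) 1) (i : ℕ) :
    cfA (hmap y) (i + 2) = cfA y (i + 1) := by
  rw [cfA, cfA]
  have h2 : i + 2 - 1 = i + 1 := rfl
  rw [h2, Function.iterate_succ_apply, gauss_hmap hy, Nat.add_sub_cancel]

lemma cfS_hmap {y : ℝ} (hy : y ∈ Ico (0:ℝ) 1) (n : ℕ) :
    cfS (hmap y) (n + 1) = 1 + cfS y n := by
  rw [cfS_range, cfS_range, Finset.sum_range_succ', show (0:ℕ)+1 = 1 from rfl,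
    cfA_hmap_one hy, add_comm]
  congr 1
  exact Finset.sum_congr rfl fun i _ => cfA_hmap_succ hy i

lemma hmap_irrational {y : ℝ} (hy : Irrational y) : Irrational (hmap y) := by
  have : Irrational ((1:ℤ) + y) := hy.intCast_add 1
  have h2 : Irrational (1 + y) := by push_cast at this; exact this
  exact h2.inv

lemma hmap_iter_mem {x : ℝ} (hx : x ∈ Ioo (0:ℝ) 1) (K : ℕ) : hmap^[K] x ∈ Ioo (0:ℝ) 1 := by
  induction K with
  | zero => simpa
  | succ K ih => rw [Function.iterate_succ_apply']; exact hmap_mem' ih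

lemma hmap_iter_irrational {x : ℝ} (hx : Irrational x) (K : ℕ) : Irrational (hmap^[K] x) := by
  induction K with
  | zero => simpa
  | succ K ih => rw [Function.iterate_succ_apply']; exact hmap_irrational ih

lemma cfS_hmap_iter {x : ℝ} (hx : x ∈ Ioo (0:ℝ) 1) (K n : ℕ) :
    cfS (hmap^[K] x) n = min n K + cfS x (n - K) := by
  induction K generalizing n with
  | zero => simp
  | succ K ih =>
    rcases Nat.eq_zero_or_pos n with rfl | hn
    · simp [cfS]
    · obtain ⟨m, rfl⟩ := Nat.exists_eq_add_of_le hn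
      rw [Function.iterate_succ_apply', add_comm 1 m,
        cfS_hmap (Ico_subset_Ico_right le_rfl ⟨(hmap_iter_mem hx K).1.le, (hmap_iter_mem hx K).2⟩) m,
        ih m]
      have h1 : m + 1 - (K + 1) = m - K := by omega
      have h2 : min (m + 1) (K + 1) = min m K + 1 := by omega
      rw [h1, h2]
      ring

lemma hmap_iter_slow {x : ℝ} {C : ℝ} {M : ℕ} (hx : x ∈ Ioo (0:ℝ) 1) (hirr : Irrational x)
    (hC : 2 ≤ C) (hbd : ∀ n, 1 ≤ n → (cfS x n : ℝ) ≤ C * n + M) :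
    hmap^[M] x ∈ slowSet C := by
  refine ⟨hmap_iter_mem hx M, hmap_iter_irrational hirr M, fun n hn => ?_⟩
  have hn0 : (0:ℝ) < n := by exact_mod_cast hn
  rw [div_le_iff₀ hn0, cfS_hmap_iter hx M n]
  rcases le_or_gt n M with h | h
  · have : n - M = 0 := Nat.sub_eq_zero_of_le h
    rw [this, min_eq_left h]
    simp only [cfS, Finset.Icc_self]
    norm_num
    calc (n:ℝ) = 1 * n := (one_mul _).symm
    _ ≤ C * n := by nlinarith
  · have hmn : min n M = M := min_eq_right h.le
    rw [hmn]
    have h1 : 1 ≤ n - M := by omega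
    have h2 := hbd (n - M) h1
    have h3 : ((n - M : ℕ) : ℝ) = (n : ℝ) - M := by
      have := Nat.cast_sub (le_of_lt h) (R := ℝ)
      exact this
    rw [h3] at h2
    push_cast
    nlinarith [show (0:ℝ) ≤ (M:ℝ) from Nat.cast_nonneg M]

lemma gauss_lipschitz : LipschitzOnWith 4 gaussMap (Ioo (2⁻¹:ℝ) 1) := by
  have hfl : ∀ w : ℝ, w ∈ Ioo (2⁻¹:ℝ) 1 → gaussMap w = w⁻¹ - 1 := by
    intro w hw
    have hw0 : (0:ℝ) < w := lt_trans (by norm_num) hw.1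
    have h1 : (1:ℝ) < w⁻¹ := (one_lt_inv₀ hw0).mpr hw.2
    have h2 : w⁻¹ < 2 := by
      rw [show (2:ℝ) = (2⁻¹:ℝ)⁻¹ by norm_num, inv_lt_inv₀ hw0 (by norm_num)]
      exact hw.1
    rw [gaussMap, Int.fract]
    have hfloor : ⌊w⁻¹⌋ = 1 := by
      rw [Int.floor_eq_iff]
      constructor <;> push_cast <;> linarith
    rw [hfloor]; push_cast; ring
  rw [lipschitzOnWith_iff_dist_le_mul]
  intro x hx z hz
  rw [hfl x hx, hfl z hz, Real.dist_eq, Real.dist_eq]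
  have hxp : (0:ℝ) < x := lt_trans (by norm_num) hx.1
  have hzp : (0:ℝ) < z := lt_trans (by norm_num) hz.1
  have key : x⁻¹ - 1 - (z⁻¹ - 1) = (z - x) / (x * z) := by field_simp; ring
  rw [key, abs_div, abs_of_pos (mul_pos hxp hzp), div_le_iff₀ (mul_pos hxp hzp),
    abs_sub_comm z x]
  have h4 : ((4:NNReal):ℝ) = 4 := by norm_num
  rw [h4]
  have h1 : (2⁻¹:ℝ) < x := hx.1
  have h2 : (2⁻¹:ℝ) < z := hz.1
  nlinarith [abs_nonneg (x - z),
    mul_pos (show (0:ℝ) < x - 2⁻¹ by linarith) (show (0:ℝ) < z - 2⁻¹ by linarith),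
    mul_nonneg (mul_nonneg (abs_nonneg (x - z)) hxp.le) hzp.le,
    mul_nonneg (abs_nonneg (x - z)) (show (0:ℝ) ≤ x + z - 1 by linarith)]

lemma dimH_le_hmap_image {S : Set ℝ} (hS : S ⊆ Ioo (0:ℝ) 1) :
    dimH S ≤ dimH (hmap '' S) := by
  have himg : gaussMap '' (hmap '' S) = S := by
    rw [Set.image_image]
    have : ∀ y ∈ S, gaussMap (hmap y) = y := fun y hy =>
      gauss_hmap ⟨(hS hy).1.le, (hS hy).2⟩
    rw [Set.image_congr this, Set.image_id']
  have hsub : hmap '' S ⊆ Ioo (2⁻¹:ℝ) 1 := by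
    rintro _ ⟨y, hy, rfl⟩
    exact hmap_mem (hS hy)
  calc dimH S = dimH (gaussMap '' (hmap '' S)) := by rw [himg]
  _ ≤ dimH (hmap '' S) :=
      (gauss_lipschitz.mono hsub).dimH_image_le

lemma dimH_le_hmap_iter_image {S : Set ℝ} (hS : S ⊆ Ioo (0:ℝ) 1) (K : ℕ) :
    dimH S ≤ dimH (hmap^[K] '' S) := by
  induction K with
  | zero => simp
  | succ K ih =>
    have hsub : hmap^[K] '' S ⊆ Ioo (0:ℝ) 1 := by
      rintro _ ⟨y, hy, rfl⟩
      exact hmap_iter_mem (hS hy) K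
    calc dimH S ≤ dimH (hmap^[K] '' S) := ih
    _ ≤ dimH (hmap '' (hmap^[K] '' S)) := dimH_le_hmap_image hsub
    _ = dimH (hmap^[K+1] '' S) := by
        rw [Function.iterate_succ' hmap K, Set.image_comp]

theorem stmt_6 (φ : ℕ → ℝ) (hpos : ∀ n, 0 < φ n) (hmono : Monotone φ)
    (α : ℝ) (hα : 0 < α)
    (hCV : ∀ A : ℝ, dimH (slowSet A) < 1)
    (hdim : dimH (levelSet φ α) = 1) :
    Filter.limsup (fun n => ((φ n / n : ℝ) : EReal)) atTop = (⊤ : EReal) := by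
  by_contra hne
  have hlt : limsup (fun n => ((φ n / n : ℝ) : EReal)) atTop < ⊤ := lt_top_iff_ne_top.mpr hne
  obtain ⟨b, hb1, -⟩ := EReal.lt_iff_exists_real_btwn.mp hlt
  have hev : ∀ᶠ n in atTop, ((φ n / n : ℝ) : EReal) < (b : EReal) :=
    eventually_lt_of_limsup_lt hb1
  obtain ⟨N0, hN0⟩ := eventually_atTop.mp hev
  set N1 := max N0 1 with hN1
  set B := max b (φ N1) with hB
  have hBpos : 0 < B := lt_of_lt_of_le (hpos N1) (le_max_right _ _)
  have hφle : ∀ n, 1 ≤ n → φ n ≤ B * n := by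
    intro n hn
    have hn0 : (0:ℝ) < n := by exact_mod_cast hn
    rcases le_or_gt N1 n with h | h
    · have h1 := hN0 n (le_trans (le_max_left N0 1) h)
      have hb' : φ n / n < b := by exact_mod_cast h1
      rw [div_lt_iff₀ hn0] at hb'
      calc φ n ≤ b * n := hb'.le
      _ ≤ B * n := mul_le_mul_of_nonneg_right (le_max_left _ _) hn0.le
    · calc φ n ≤ φ N1 := hmono h.le
      _ ≤ B := le_max_right _ _
      _ ≤ B * n := by nlinarith [show (1:ℝ) ≤ (n:ℝ) from by exact_mod_cast hn]
  set C := max ((α + 1) * B) 2 with hC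
  have hC2 : 2 ≤ C := le_max_right _ _
  set G : ℕ → Set ℝ := fun M => {x : ℝ | x ∈ Ioo (0:ℝ) 1 ∧ Irrational x ∧
    ∀ n, 1 ≤ n → (cfS x n : ℝ) ≤ C * n + M} with hG
  have hcover : levelSet φ α ⊆ ⋃ M : ℕ, G M := by
    intro x hx
    obtain ⟨hxI, hxirr, hxt⟩ := hx
    have hev2 : ∀ᶠ n in atTop, (cfS x n : ℝ) / φ n < α + 1 :=
      hxt.eventually_lt_const (by linarith)
    obtain ⟨N2, hN2⟩ := eventually_atTop.mp hev2
    set N3 := max N2 1 with hN3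
    refine mem_iUnion.mpr ⟨cfS x N3, hxI, hxirr, fun n hn => ?_⟩
    have hn0 : (0:ℝ) < n := by exact_mod_cast hn
    rcases le_or_gt N3 n with h | h
    · have h5 := hN2 n (le_trans (le_max_left _ _) h)
      have hφn := hpos n
      rw [div_lt_iff₀ hφn] at h5
      have h6 : (α+1) * φ n ≤ (α+1) * (B * n) :=
        mul_le_mul_of_nonneg_left (hφle n hn) (by linarith)
      have h7 : (α+1) * (B*n) ≤ C * n := by
        have hCle : (α+1)*B ≤ C := le_max_left _ _
        nlinarith
      have h8 : (0:ℝ) ≤ (cfS x N3 : ℝ) := Nat.cast_nonneg _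
      linarith
    · have h9 : cfS x n ≤ cfS x N3 := cfS_mono x h.le
      have h10 : (0:ℝ) ≤ C * n := mul_nonneg (by linarith) (Nat.cast_nonneg n)
      calc (cfS x n : ℝ) ≤ cfS x N3 := by exact_mod_cast h9
      _ ≤ C*n + cfS x N3 := by linarith
  have hdle : dimH (levelSet φ α) ≤ dimH (slowSet C) := by
    calc dimH (levelSet φ α) ≤ dimH (⋃ M : ℕ, G M) := dimH_mono hcover
    _ = ⨆ M : ℕ, dimH (G M) := dimH_iUnion _
    _ ≤ dimH (slowSet C) := by
        refine iSup_le fun M => ?_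
        have hGsub : G M ⊆ Ioo (0:ℝ) 1 := fun x hx => hx.1
        calc dimH (G M) ≤ dimH (hmap^[M] '' G M) := dimH_le_hmap_iter_image hGsub M
        _ ≤ dimH (slowSet C) := dimH_mono (by
            rintro _ ⟨x, hx, rfl⟩
            exact hmap_iter_slow hx.1 hx.2.1 hC2 hx.2.2)
  rw [hdim] at hdle
  exact absurd (lt_of_le_of_lt hdle (hCV C)) (lt_irrefl 1)
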